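/- Let p ∈ [1,2] and let α ≥ 2 be an integer. For each positive integer k set j_k = α^{k(k-1)}, and for j_k ≤ j ≤ 2j_k − 1 define x^{(j)} = j_k^{−(1/2 + 1/p + 1/k)} · ∑_{s=1}^{j_k} exp(2πi·rs/j_k) · e_{j_k + s − 1} ∈ ℓ_p(ℂ), where r = j − j_k + 1. Then for every positive integer k and every continuous linear functional φ on ℓ_p(ℂ) with ‖φ‖ ≤ 1, one has ∑_{j=j_k}^{2j_k − 1} |φ(x^{(j)})| ≤ α^{1−k}. -/

import Mathlib

open scoped ENNReal Real
open Complex Finset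


lemma aux_sum_exp (J : ℕ) {s t : ℕ} (hs : s ∈ Finset.Icc 1 J) (ht : t ∈ Finset.Icc 1 J) :
    ∑ r ∈ Finset.Icc 1 J, Complex.exp (2 * Real.pi * Complex.I * ((s : ℂ) - (t : ℂ)) * r / J)
      = if s = t then (J : ℂ) else 0 := by
  simp only [Finset.mem_Icc] at hs ht
  have hJpos : 0 < J := lt_of_lt_of_le one_pos (hs.1.trans hs.2)
  rcases eq_or_ne s t with rfl | hst
  · simp
  · rw [if_neg hst]
    set w : ℂ := Complex.exp (2 * Real.pi * Complex.I * ((s : ℂ) - (t : ℂ)) / J) with hw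
    have hJ0 : (J : ℂ) ≠ 0 := Nat.cast_ne_zero.mpr hJpos.ne'
    have hterm : ∀ r : ℕ, Complex.exp (2 * Real.pi * Complex.I * ((s : ℂ) - (t : ℂ)) * r / J) = w ^ r := by
      intro r
      rw [hw, ← Complex.exp_nat_mul]
      ring_nf
    have hwJ : w ^ J = 1 := by
      rw [hw, ← Complex.exp_nat_mul]
      have : (J : ℂ) * (2 * Real.pi * Complex.I * ((s : ℂ) - (t : ℂ)) / J)
          = ((s : ℤ) - (t : ℤ) : ℤ) * (2 * Real.pi * Complex.I) := by
        push_cast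
        field_simp
      rw [this, Complex.exp_int_mul_two_pi_mul_I]
    have hw1 : w ≠ 1 := by
      rw [hw, Ne, Complex.exp_eq_one_iff]
      rintro ⟨n, hn⟩
      have h2 : (2 * Real.pi * Complex.I) ≠ 0 := by
        simp [Real.pi_ne_zero, Complex.I_ne_zero, Complex.ofReal_ne_zero]
      rw [div_eq_iff hJ0] at hn
      have h3 : 2 * (Real.pi : ℂ) * Complex.I * ((s : ℂ) - t)
          = 2 * (Real.pi : ℂ) * Complex.I * ((n : ℂ) * J) := by linear_combination hn
      have hc : ((s : ℂ) - t) = n * J := mul_left_cancel₀ h2 h3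
      have hint : (s : ℤ) - t = n * J := by exact_mod_cast hc
      have habs : |(s : ℤ) - t| < J := by
        rw [abs_sub_lt_iff]; omega
      have hne : (s : ℤ) - t ≠ 0 := by omega
      rw [hint] at habs hne
      rcases eq_or_ne n 0 with rfl | hn0
      · simp at hne
      · have h1n : (1 : ℤ) ≤ |n| := Int.one_le_abs (by simpa using hn0)
        have hJ1 : (1 : ℤ) ≤ (J : ℤ) := by exact_mod_cast hJpos
        rw [abs_mul, abs_of_nonneg (show (0:ℤ) ≤ (J:ℤ) by positivity)] at habs
        nlinarith
    calc ∑ r ∈ Finset.Icc 1 J, Complex.exp (2 * Real.pi * Complex.I * ((s : ℂ) - (t : ℂ)) * r / J)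
        = ∑ r ∈ Finset.Icc 1 J, w ^ r := by simp_rw [hterm]
      _ = ∑ r ∈ Finset.range J, w ^ (1 + r) := by
          rw [← Finset.Ico_add_one_right_eq_Icc, Finset.sum_Ico_eq_sum_range]
          simp
      _ = w * ∑ r ∈ Finset.range J, w ^ r := by
          rw [Finset.mul_sum]; simp_rw [pow_add, pow_one]
      _ = 0 := by
          rw [geom_sum_eq hw1, hwJ]
          simp

lemma aux_parseval (J : ℕ) (b : ℕ → ℂ) :
    ∑ r ∈ Finset.Icc 1 J, ‖∑ s ∈ Finset.Icc 1 J,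
        Complex.exp (2 * Real.pi * Complex.I * ((r : ℂ) * (s : ℂ)) / J) * b s‖ ^ 2
      = J * ∑ s ∈ Finset.Icc 1 J, ‖b s‖ ^ 2 := by
  have key : ∑ r ∈ Finset.Icc 1 J, ((∑ s ∈ Finset.Icc 1 J,
        Complex.exp (2 * Real.pi * Complex.I * ((r : ℂ) * (s : ℂ)) / J) * b s) *
      (starRingEnd ℂ) (∑ s ∈ Finset.Icc 1 J,
        Complex.exp (2 * Real.pi * Complex.I * ((r : ℂ) * (s : ℂ)) / J) * b s))
      = (J : ℂ) * ∑ s ∈ Finset.Icc 1 J, b s * (starRingEnd ℂ) (b s) := by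
    have expand : ∀ r ∈ Finset.Icc 1 J, (∑ s ∈ Finset.Icc 1 J,
          Complex.exp (2 * Real.pi * Complex.I * ((r : ℂ) * (s : ℂ)) / J) * b s) *
        (starRingEnd ℂ) (∑ s ∈ Finset.Icc 1 J,
          Complex.exp (2 * Real.pi * Complex.I * ((r : ℂ) * (s : ℂ)) / J) * b s)
        = ∑ s ∈ Finset.Icc 1 J, ∑ t ∈ Finset.Icc 1 J,
            (b s * (starRingEnd ℂ) (b t)) *
              Complex.exp (2 * Real.pi * Complex.I * ((s : ℂ) - (t : ℂ)) * r / J) := by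
      intro r _
      rw [map_sum, Finset.sum_mul_sum]
      refine Finset.sum_congr rfl fun s _ => Finset.sum_congr rfl fun t _ => ?_
      rw [map_mul, ← Complex.exp_conj]
      have hconj : (starRingEnd ℂ) (2 * Real.pi * Complex.I * ((r : ℂ) * (t : ℂ)) / J)
          = -(2 * Real.pi * Complex.I * ((r : ℂ) * (t : ℂ)) / J) := by
        simp only [map_div₀, map_mul, Complex.conj_I, Complex.conj_ofReal,
          Complex.conj_natCast, map_ofNat]
        ring
      rw [hconj,
        show Complex.exp (2 * Real.pi * Complex.I * ((r : ℂ) * (s : ℂ)) / J) * b s *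
          (Complex.exp (-(2 * Real.pi * Complex.I * ((r : ℂ) * (t : ℂ)) / J)) * (starRingEnd ℂ) (b t))
          = (b s * (starRingEnd ℂ) (b t)) *
            (Complex.exp (2 * Real.pi * Complex.I * ((r : ℂ) * (s : ℂ)) / J) *
             Complex.exp (-(2 * Real.pi * Complex.I * ((r : ℂ) * (t : ℂ)) / J))) by ring,
        ← Complex.exp_add]
      congr 2
      ring
    rw [Finset.sum_congr rfl expand, Finset.sum_comm]
    have inner : ∀ s ∈ Finset.Icc 1 J, ∑ r ∈ Finset.Icc 1 J, ∑ t ∈ Finset.Icc 1 J,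
        (b s * (starRingEnd ℂ) (b t)) *
          Complex.exp (2 * Real.pi * Complex.I * ((s : ℂ) - (t : ℂ)) * r / J)
        = b s * (starRingEnd ℂ) (b s) * J := by
      intro s hs
      rw [Finset.sum_comm]
      calc ∑ t ∈ Finset.Icc 1 J, ∑ r ∈ Finset.Icc 1 J,
            (b s * (starRingEnd ℂ) (b t)) *
              Complex.exp (2 * Real.pi * Complex.I * ((s : ℂ) - (t : ℂ)) * r / J)
          = ∑ t ∈ Finset.Icc 1 J,
              (b s * (starRingEnd ℂ) (b t)) * (if s = t then (J : ℂ) else 0) := by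
            refine Finset.sum_congr rfl fun t ht => ?_
            rw [← Finset.mul_sum, aux_sum_exp J hs ht]
        _ = b s * (starRingEnd ℂ) (b s) * J := by
            simp_rw [mul_ite, mul_zero]
            rw [Finset.sum_ite_eq]
            simp [hs]
    rw [Finset.sum_congr rfl inner, ← Finset.sum_mul]; ring
  have hnorm : ∀ z : ℂ, (z * (starRingEnd ℂ) z) = ((‖z‖ ^ 2 : ℝ) : ℂ) := by
    intro z
    rw [Complex.mul_conj, Complex.normSq_eq_norm_sq]
  simp_rw [hnorm] at key
  have : ((∑ r ∈ Finset.Icc 1 J, ‖∑ s ∈ Finset.Icc 1 J,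
        Complex.exp (2 * Real.pi * Complex.I * ((r : ℂ) * (s : ℂ)) / J) * b s‖ ^ 2 : ℝ) : ℂ)
      = (((J : ℝ) * ∑ s ∈ Finset.Icc 1 J, ‖b s‖ ^ 2 : ℝ) : ℂ) := by
    push_cast
    push_cast at key
    convert key using 2
  exact_mod_cast this


lemma aux_dual_l2 (p : ℝ≥0∞) [Fact (1 ≤ p)] (hp2 : p ≤ 2)
    (φ : lp (fun _ : ℕ => ℂ) p →L[ℂ] ℂ) (hφ : ‖φ‖ ≤ 1) (S : Finset ℕ) :
    ∑ n ∈ S, ‖φ (lp.single p n 1)‖ ^ 2 ≤ (S.card : ℝ) ^ (2 / p.toReal - 1) := by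
  have hp_top : p ≠ ∞ := (lt_of_le_of_lt hp2 (by norm_num)).ne
  set pr := p.toReal with hprdef
  have hpr1 : 1 ≤ pr := by
    rw [hprdef, ← ENNReal.toReal_one]
    exact ENNReal.toReal_mono hp_top Fact.out
  have hpr2 : pr ≤ 2 := by
    rw [hprdef, show (2:ℝ) = (2:ℝ≥0∞).toReal by norm_num]
    exact ENNReal.toReal_mono (by norm_num) hp2
  have hpr0 : 0 < pr := lt_of_lt_of_le one_pos hpr1
  set b : ℕ → ℂ := fun n => φ (lp.single p n 1) with hb
  set T : ℝ := ∑ n ∈ S, ‖b n‖ ^ 2 with hT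
  have hT0 : 0 ≤ T := Finset.sum_nonneg fun n _ => by positivity
  rcases Finset.eq_empty_or_nonempty S with rfl | hS
  · simp [hT]
    positivity
  have hcard : 0 < (S.card : ℝ) := by exact_mod_cast Finset.card_pos.mpr hS
  set y : lp (fun _ : ℕ => ℂ) p := ∑ n ∈ S, lp.single p n ((starRingEnd ℂ) (b n)) with hy
  have hφy : φ y = (T : ℂ) := by
    rw [hy, map_sum, hT]
    push_cast
    refine Finset.sum_congr rfl fun n _ => ?_
    have h1 : lp.single p n ((starRingEnd ℂ) (b n))
        = ((starRingEnd ℂ) (b n) • lp.single p n (1 : ℂ) : lp (fun _ : ℕ => ℂ) p) := by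
      rw [← lp.single_smul, smul_eq_mul, mul_one]
    rw [h1, map_smul, smul_eq_mul]
    have hbn : φ (lp.single p n 1) = b n := rfl
    rw [hbn, mul_comm, Complex.mul_conj, Complex.normSq_eq_norm_sq]
    push_cast
    ring
  have hynorm : ‖y‖ = (∑ n ∈ S, ‖b n‖ ^ pr) ^ (1 / pr) := by
    have h2 : ‖y‖ ^ pr = ∑ n ∈ S, ‖b n‖ ^ pr := by
      rw [hy]
      rw [lp.norm_sum_single hpr0 (fun n => (starRingEnd ℂ) (b n)) S]
      exact Finset.sum_congr rfl fun n _ => by rw [RCLike.norm_conj]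
    rw [← h2, ← Real.rpow_mul (norm_nonneg y), mul_one_div, div_self hpr0.ne', Real.rpow_one]
  have hTy : T ≤ ‖y‖ := by
    calc T = ‖(T : ℂ)‖ := by rw [Complex.norm_real, Real.norm_of_nonneg hT0]
      _ = ‖φ y‖ := by rw [hφy]
      _ ≤ ‖φ‖ * ‖y‖ := φ.le_opNorm y
      _ ≤ 1 * ‖y‖ := by
          apply mul_le_mul_of_nonneg_right hφ (norm_nonneg y)
      _ = ‖y‖ := one_mul _
  -- Hölder: ∑ ‖b n‖^pr ≤ card^(1 - pr/2) * T^(pr/2)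
  have hholder : ∑ n ∈ S, ‖b n‖ ^ pr ≤ (S.card : ℝ) ^ (1 - pr / 2) * T ^ (pr / 2) := by
    have ham := Real.arith_mean_le_rpow_mean S (fun _ => 1 / (S.card : ℝ))
      (fun n => ‖b n‖ ^ pr) (fun n _ => by positivity)
      (by rw [Finset.sum_const, nsmul_eq_mul]; field_simp)
      (fun n _ => by positivity) (show (1:ℝ) ≤ 2 / pr by
        rw [le_div_iff₀ hpr0]; linarith)
    have hz : ∀ n ∈ S, (‖b n‖ ^ pr) ^ (2 / pr) = (‖b n‖ : ℝ) ^ (2:ℕ) := by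
      intro n _
      rw [← Real.rpow_mul (norm_nonneg _),
        show pr * (2 / pr) = ((2:ℕ):ℝ) by push_cast; field_simp, Real.rpow_natCast]
    have ham2 : (1 / (S.card:ℝ)) * ∑ n ∈ S, ‖b n‖ ^ pr ≤ ((1 / (S.card:ℝ)) * T) ^ (pr / 2) := by
      calc (1 / (S.card:ℝ)) * ∑ n ∈ S, ‖b n‖ ^ pr
          = ∑ n ∈ S, 1/(S.card:ℝ) * ‖b n‖ ^ pr := by rw [Finset.mul_sum]
        _ ≤ (∑ n ∈ S, 1/(S.card:ℝ) * (‖b n‖ ^ pr) ^ (2/pr)) ^ (1/(2/pr)) := ham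
        _ = ((1/(S.card:ℝ)) * T) ^ (pr/2) := by
            rw [Finset.sum_congr rfl (fun n hn => by rw [hz n hn] : ∀ n ∈ S,
                1/(S.card:ℝ) * (‖b n‖ ^ pr) ^ (2/pr) = 1/(S.card:ℝ) * ‖b n‖ ^ 2),
              ← Finset.mul_sum, ← hT, one_div_div]
    calc ∑ n ∈ S, ‖b n‖ ^ pr
        = (S.card:ℝ) * ((1 / (S.card:ℝ)) * ∑ n ∈ S, ‖b n‖ ^ pr) := by
          field_simp
      _ ≤ (S.card:ℝ) * ((1 / (S.card:ℝ)) * T) ^ (pr/2) := by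
          exact mul_le_mul_of_nonneg_left ham2 (le_of_lt hcard)
      _ = (S.card : ℝ) ^ (1 - pr / 2) * T ^ (pr / 2) := by
          rw [Real.mul_rpow (by positivity) hT0, Real.div_rpow (by norm_num) (le_of_lt hcard),
            Real.one_rpow]
          rw [Real.rpow_sub hcard, Real.rpow_one]
          field_simp
  -- main chain
  have hA0 : 0 ≤ ∑ n ∈ S, ‖b n‖ ^ pr := Finset.sum_nonneg fun n _ => by positivity
  set K : ℝ := (S.card : ℝ) ^ ((2 - pr) / (2 * pr)) with hK
  have hK0 : 0 < K := Real.rpow_pos_of_pos hcard _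
  have hmain : T ≤ K * T ^ ((1:ℝ)/2) := by
    calc T ≤ ‖y‖ := hTy
      _ = (∑ n ∈ S, ‖b n‖ ^ pr) ^ (1 / pr) := hynorm
      _ ≤ ((S.card : ℝ) ^ (1 - pr / 2) * T ^ (pr / 2)) ^ (1 / pr) := by
          exact Real.rpow_le_rpow hA0 hholder (by positivity)
      _ = K * T ^ ((1:ℝ)/2) := by
          rw [Real.mul_rpow (by positivity) (by positivity),
            ← Real.rpow_mul (le_of_lt hcard), ← Real.rpow_mul hT0, hK]
          congr 2 <;> field_simp <;> ring
  rcases eq_or_lt_of_le hT0 with hTz | hTpos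
  · rw [← hTz]
    positivity
  · have hsq : T ^ ((1:ℝ)/2) * T ^ ((1:ℝ)/2) = T := by
      rw [← Real.rpow_add hTpos]; norm_num
    have hhalf : T ^ ((1:ℝ)/2) ≤ K := by
      have h5 : T ^ ((1:ℝ)/2) * T ^ ((1:ℝ)/2) ≤ K * T ^ ((1:ℝ)/2) := by
        rw [hsq]; exact hmain
      exact le_of_mul_le_mul_right h5 (Real.rpow_pos_of_pos hTpos _)
    have h6 : (T ^ ((1:ℝ)/2)) ^ (2:ℝ) ≤ K ^ (2:ℝ) :=
      Real.rpow_le_rpow (by positivity) hhalf (by norm_num)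
    have h7 : (T ^ ((1:ℝ)/2)) ^ (2:ℝ) = T := by
      rw [← Real.rpow_mul hT0]; norm_num
    have h8 : K ^ (2:ℝ) = (S.card : ℝ) ^ (2 / pr - 1) := by
      rw [hK, ← Real.rpow_mul (le_of_lt hcard)]
      congr 1
      field_simp
    rw [← h8, ← h7]
    exact h6

/-- **The block estimate (2.7).**
Let `p ∈ [1,2]`, `α ≥ 2` an integer, `j_k = α^{k(k-1)}` and
`x⁽ʲ⁾ = j_k^{-(1/2+1/p+1/k)} ∑_{s=1}^{j_k} exp(2πi·rs/j_k) e_{j_k+s-1}`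
for `j_k ≤ j ≤ 2j_k - 1`, `r = j - j_k + 1`.  Then for every `k ≥ 1` and every
norm-one functional `φ` on `ℓ_p(ℂ)`, `∑_{j=j_k}^{2j_k-1} |φ(x⁽ʲ⁾)| ≤ α^{1-k}`. -/
theorem macphail_block_dual_estimate
    (p : ℝ≥0∞) [Fact (1 ≤ p)] (hp2 : p ≤ 2)
    (α : ℕ) (hα : 2 ≤ α) (k : ℕ) (hk : 0 < k)
    (φ : lp (fun _ : ℕ => ℂ) p →L[ℂ] ℂ) (hφ : ‖φ‖ ≤ 1) :
    ∑ j ∈ Finset.Icc (α ^ (k * (k - 1))) (2 * α ^ (k * (k - 1)) - 1),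
        ‖φ (((α ^ (k * (k - 1)) : ℝ) ^ (-(1 / 2 + 1 / p.toReal + 1 / (k : ℝ)))) •
          ∑ s ∈ Finset.Icc 1 (α ^ (k * (k - 1))),
            Complex.exp (2 * Real.pi * Complex.I *
                (((j - α ^ (k * (k - 1)) + 1 : ℕ) : ℂ) * (s : ℂ)) /
                  ((α : ℂ) ^ (k * (k - 1)))) •
              lp.single p (α ^ (k * (k - 1)) + s - 1) (1 : ℂ))‖ ≤
      (α : ℝ) ^ ((1 : ℤ) - (k : ℤ)) := by
  have hp_top : p ≠ ∞ := (lt_of_le_of_lt hp2 (by norm_num)).ne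
  set pr := p.toReal with hprdef
  have hpr1 : 1 ≤ pr := by
    rw [hprdef, ← ENNReal.toReal_one]
    exact ENNReal.toReal_mono hp_top Fact.out
  have hpr0 : 0 < pr := lt_of_lt_of_le one_pos hpr1
  set N := k * (k - 1) with hNdef
  set J := α ^ N with hJdef
  have hα1 : 1 ≤ α := by omega
  have hJ1 : 1 ≤ J := Nat.one_le_pow _ _ (by omega)
  have hJR : (0 : ℝ) < (J : ℝ) := by exact_mod_cast hJ1
  set b : ℕ → ℂ := fun n => φ (lp.single p n 1) with hb
  set C : ℝ := ((J : ℝ)) ^ (-(1 / 2 + 1 / pr + 1 / (k : ℝ))) with hC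
  have hC0 : 0 ≤ C := Real.rpow_nonneg (le_of_lt hJR) _
  set cfun : ℕ → ℝ := fun r => ‖∑ s ∈ Finset.Icc 1 J,
      Complex.exp (2 * Real.pi * Complex.I * ((r : ℂ) * (s : ℂ)) / (J : ℂ)) *
        b (J + s - 1)‖ with hcfun
  -- Step 1: each summand equals C * cfun (j - J + 1)
  have hterm : ∀ j : ℕ,
      ‖φ (((α ^ N : ℝ) ^ (-(1 / 2 + 1 / pr + 1 / (k : ℝ)))) •
          ∑ s ∈ Finset.Icc 1 J,
            Complex.exp (2 * Real.pi * Complex.I *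
                (((j - J + 1 : ℕ) : ℂ) * (s : ℂ)) / ((α : ℂ) ^ N)) •
              lp.single p (J + s - 1) (1 : ℂ))‖ = C * cfun (j - J + 1) := by
    intro j
    have hCeq : ((α ^ N : ℝ) ^ (-(1 / 2 + 1 / pr + 1 / (k : ℝ)))) = C := by
      rw [hC, hJdef]
      push_cast
      rfl
    rw [hCeq, φ.map_smul_of_tower, norm_smul, Real.norm_of_nonneg hC0]
    congr 1
    rw [hcfun]
    congr 1
    rw [map_sum]
    refine Finset.sum_congr rfl fun s _ => ?_
    rw [map_smul, smul_eq_mul]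
    congr 2
    · congr 1
      rw [hJdef]
      push_cast
      ring
  -- rewrite the sum
  rw [Finset.sum_congr rfl (fun j _ => hterm j)]
  have hreindex : ∑ j ∈ Finset.Icc J (2 * J - 1), C * cfun (j - J + 1)
      = ∑ r ∈ Finset.Icc 1 J, C * cfun r := by
    refine Finset.sum_nbij' (fun j => j - J + 1) (fun r => r + J - 1) ?_ ?_ ?_ ?_ ?_
    · intro a ha; simp only [Finset.mem_Icc] at *; omega
    · intro a ha; simp only [Finset.mem_Icc] at *; omega
    · intro a ha; simp only [Finset.mem_Icc] at *; omega
    · intro a ha; simp only [Finset.mem_Icc] at *; omega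
    · intro a ha; rfl
  rw [hreindex, ← Finset.mul_sum]
  -- T' bound
  set T' : ℝ := ∑ s ∈ Finset.Icc 1 J, ‖b (J + s - 1)‖ ^ 2 with hT'
  have hT'0 : 0 ≤ T' := Finset.sum_nonneg fun s _ => by positivity
  have hT'le : T' ≤ (J : ℝ) ^ (2 / pr - 1) := by
    set S : Finset ℕ := (Finset.Icc 1 J).image (fun s => J + s - 1) with hS
    have hinj : ∀ x ∈ Finset.Icc 1 J, ∀ y ∈ Finset.Icc 1 J,
        J + x - 1 = J + y - 1 → x = y := by intro x hx y hy h; omega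
    have hcard : S.card = J := by
      rw [hS, Finset.card_image_of_injOn hinj, Nat.card_Icc]
      omega
    have := aux_dual_l2 p hp2 φ hφ S
    rw [hcard] at this
    rw [hT']
    calc ∑ s ∈ Finset.Icc 1 J, ‖b (J + s - 1)‖ ^ 2
        = ∑ n ∈ S, ‖φ (lp.single p n 1)‖ ^ 2 := by
          rw [hS, Finset.sum_image hinj]
      _ ≤ (J : ℝ) ^ (2 / p.toReal - 1) := this
  -- Cauchy-Schwarz + Parseval
  have hpar : ∑ r ∈ Finset.Icc 1 J, (cfun r) ^ 2 = (J : ℝ) * T' := by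
    rw [hT']
    exact aux_parseval J (fun s => b (J + s - 1))
  have hcs : (∑ r ∈ Finset.Icc 1 J, cfun r) ^ 2
      ≤ (J : ℝ) * ∑ r ∈ Finset.Icc 1 J, (cfun r) ^ 2 := by
    have h := Finset.sum_mul_sq_le_sq_mul_sq (Finset.Icc 1 J) (fun _ => (1:ℝ)) cfun
    simpa [Nat.card_Icc, mul_comm] using h
  set D : ℝ := (J : ℝ) ^ ((1:ℝ)/2 + 1/pr) with hD
  have hsum0 : 0 ≤ ∑ r ∈ Finset.Icc 1 J, cfun r :=
    Finset.sum_nonneg fun r _ => norm_nonneg _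
  have hD2 : D ^ (2:ℕ) = (J : ℝ) * ((J : ℝ) * (J : ℝ) ^ (2/pr - 1)) := by
    rw [hD, ← Real.rpow_natCast ((J:ℝ) ^ ((1:ℝ)/2 + 1/pr)) 2, ← Real.rpow_mul (le_of_lt hJR)]
    rw [show ((1:ℝ)/2 + 1/pr) * (2:ℕ) = 1 + (1 + (2/pr - 1)) by push_cast; ring]
    rw [Real.rpow_add hJR, Real.rpow_add hJR, Real.rpow_one]
  have hsumD : ∑ r ∈ Finset.Icc 1 J, cfun r ≤ D := by
    have h2 : (∑ r ∈ Finset.Icc 1 J, cfun r) ^ 2 ≤ D ^ 2 := by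
      rw [hD2]
      calc (∑ r ∈ Finset.Icc 1 J, cfun r) ^ 2
          ≤ (J : ℝ) * ∑ r ∈ Finset.Icc 1 J, (cfun r) ^ 2 := hcs
        _ = (J : ℝ) * ((J : ℝ) * T') := by rw [hpar]
        _ ≤ (J : ℝ) * ((J : ℝ) * (J : ℝ) ^ (2/pr - 1)) := by
            apply mul_le_mul_of_nonneg_left _ (le_of_lt hJR)
            exact mul_le_mul_of_nonneg_left hT'le (le_of_lt hJR)
    exact le_of_pow_le_pow_left₀ (by norm_num) (Real.rpow_nonneg (le_of_lt hJR) _) h2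
  -- final arithmetic
  have hfinal : C * D = (α : ℝ) ^ ((1 : ℤ) - (k : ℤ)) := by
    rw [hC, hD, ← Real.rpow_add hJR]
    rw [show -(1 / 2 + 1 / pr + 1 / (k : ℝ)) + ((1:ℝ)/2 + 1/pr) = -(1/(k:ℝ)) by ring]
    rw [hJdef]
    push_cast
    rw [← Real.rpow_natCast ((α:ℝ)) N, ← Real.rpow_mul (by positivity)]
    rw [← Real.rpow_intCast ((α:ℝ)) ((1:ℤ) - (k:ℤ))]
    congr 1
    rw [hNdef]
    have hk1 : ((k - 1 : ℕ) : ℝ) = (k : ℝ) - 1 := by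
      push_cast [Nat.cast_sub hk]
      ring
    push_cast [hk1]
    have hkR : ((k:ℝ)) ≠ 0 := by positivity
    field_simp
    ring
  calc C * ∑ r ∈ Finset.Icc 1 J, cfun r ≤ C * D := mul_le_mul_of_nonneg_left hsumD hC0
    _ = (α : ℝ) ^ ((1 : ℤ) - (k : ℤ)) := hfinal
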